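/- arXiv:2603.05055 — 4 statements merged into one kernel-verified Lean document; each statement's English description precedes it below -/
import Mathlib

section
/- Let δ_n denote the modal formula ◇^n⊤ ∧ ¬◇^{n+1}⊤, and for S ⊆ ℕ let Φ_S = {δ_{2n} | n ∈ S} ∪ {δ_{2n+1} | n ∉ S}. Then for all S, S' ⊆ ℕ with S ≠ S', the fragment ML_{Φ_S} is not expressively contained in ML_{Φ_{S'}} with respect to the minimal normal modal logic K. In particular, there are continuum many pairwise expressively incomparable modal fragments with respect to K, and hence continuum many pairwise-incomparable modal clones with respect to K. -/
set_option maxHeartbeats 1000000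

/-! ### Modal formulas -/

inductive MF : Type
  | var : ℕ → MF
  | neg : MF → MF
  | and : MF → MF → MF
  | or : MF → MF → MF
  | dia : MF → MF
  | box : MF → MF

namespace MF

/-- Implication `φ → ψ`, as the abbreviation `¬φ ∨ ψ`. -/
def imp (φ ψ : MF) : MF := .or (.neg φ) ψ

/-- Bi-implication `φ ↔ ψ`. -/
def iff (φ ψ : MF) : MF := .and (φ.imp ψ) (ψ.imp φ)

/-- `⊥` abbreviates `p ∧ ¬p`. -/
def bot : MF := .and (.var 0) (.neg (.var 0))

/-- `⊤` abbreviates `p ∨ ¬p`. -/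
def top : MF := .or (.var 0) (.neg (.var 0))

/-- A formula is purely propositional if it contains no modal operators. -/
def isProp : MF → Prop
  | .var _ => True
  | .neg φ => φ.isProp
  | .and φ ψ => φ.isProp ∧ ψ.isProp
  | .or φ ψ => φ.isProp ∧ ψ.isProp
  | .dia _ => False
  | .box _ => False

/-- Boolean evaluation (meaningful for purely propositional formulas). -/
def propEval (v : ℕ → Bool) : MF → Bool
  | .var n => v n
  | .neg φ => !(propEval v φ)
  | .and φ ψ => propEval v φ && propEval v ψ
  | .or φ ψ => propEval v φ || propEval v ψ
  | .dia φ => propEval v φ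
  | .box φ => propEval v φ

/-- Propositional tautologies. -/
def isTautology (φ : MF) : Prop := φ.isProp ∧ ∀ v, φ.propEval v = true

/-- Uniform substitution. -/
def subst (σ : ℕ → MF) : MF → MF
  | .var n => σ n
  | .neg φ => .neg (φ.subst σ)
  | .and φ ψ => .and (φ.subst σ) (ψ.subst σ)
  | .or φ ψ => .or (φ.subst σ) (ψ.subst σ)
  | .dia φ => .dia (φ.subst σ)
  | .box φ => .box (φ.subst σ)

/-- The set of propositional variables occurring in a formula. -/
def vars : MF → Set ℕ
  | .var n => {n}
  | .neg φ => φ.vars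
  | .and φ ψ => φ.vars ∪ ψ.vars
  | .or φ ψ => φ.vars ∪ ψ.vars
  | .dia φ => φ.vars
  | .box φ => φ.vars

/-- Kripke satisfaction. -/
def sat {W : Type} (R : W → W → Prop) (V : ℕ → W → Prop) : MF → W → Prop
  | .var n, w => V n w
  | .neg φ, w => ¬ sat R V φ w
  | .and φ ψ, w => sat R V φ w ∧ sat R V ψ w
  | .or φ ψ, w => sat R V φ w ∨ sat R V ψ w
  | .dia φ, w => ∃ u, R w u ∧ sat R V φ u
  | .box φ, w => ∀ u, R w u → sat R V φ u

/-- `◇^n φ`. -/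
def diaIter : ℕ → MF → MF
  | 0, φ => φ
  | n + 1, φ => .dia (diaIter n φ)

/-- `□^n φ`. -/
def boxIter : ℕ → MF → MF
  | 0, φ => φ
  | n + 1, φ => .box (boxIter n φ)

/-- `◇^{≤n} φ`, the disjunction of `◇^k φ` for `0 ≤ k ≤ n`. -/
def diaLe : ℕ → MF → MF
  | 0, φ => φ
  | n + 1, φ => .or (diaLe n φ) (diaIter (n + 1) φ)

/-- An injective numeric encoding of modal formulas. -/
def encodeMF : MF → ℕ
  | .var n => Nat.pair 0 n
  | .neg φ => Nat.pair 1 φ.encodeMF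
  | .and φ ψ => Nat.pair 2 (Nat.pair φ.encodeMF ψ.encodeMF)
  | .or φ ψ => Nat.pair 3 (Nat.pair φ.encodeMF ψ.encodeMF)
  | .dia φ => Nat.pair 4 φ.encodeMF
  | .box φ => Nat.pair 5 φ.encodeMF

end MF

/-- A normal modal logic. -/
structure NormalLogic (Λ : Set MF) : Prop where
  taut : ∀ φ, φ.isTautology → φ ∈ Λ
  axK : ∀ φ ψ, ((MF.box (φ.imp ψ)).imp ((MF.box φ).imp (MF.box ψ))) ∈ Λ
  dual : ∀ φ, ((MF.dia φ).iff (MF.neg (MF.box (MF.neg φ)))) ∈ Λ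
  mp : ∀ φ ψ, φ.imp ψ ∈ Λ → φ ∈ Λ → ψ ∈ Λ
  usubst : ∀ φ (σ : ℕ → MF), φ ∈ Λ → φ.subst σ ∈ Λ
  nec : ∀ φ, φ ∈ Λ → MF.box φ ∈ Λ

/-- Validity on the frame `F_⊙` consisting of a single reflexive world. -/
def validOnReflPoint (φ : MF) : Prop :=
  ∀ V : ℕ → Prop, MF.sat (W := Unit) (fun _ _ => True) (fun n _ => V n) φ ()

/-- Validity on the frame `F_•` consisting of a single irreflexive world. -/
def validOnIrreflPoint (φ : MF) : Prop :=
  ∀ V : ℕ → Prop, MF.sat (W := Unit) (fun _ _ => False) (fun n _ => V n) φ ()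

/-- Type A: `F_⊙ ⊨ Λ`. -/
def TypeA (Λ : Set MF) : Prop := ∀ φ ∈ Λ, validOnReflPoint φ

/-- Type B: `F_• ⊨ Λ` and `Λ ⊢ □^n ⊥` for some `n ≥ 1`. -/
def TypeB (Λ : Set MF) : Prop :=
  (∀ φ ∈ Λ, validOnIrreflPoint φ) ∧ ∃ n ≥ 1, MF.boxIter n MF.bot ∈ Λ

/-- Type C: `F_• ⊨ Λ`, `Λ ⊬ □^n ⊥` for all `n ≥ 1`, `Λ ⊢ ◇^{≤n} □⊥` for some `n ≥ 1`. -/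
def TypeC (Λ : Set MF) : Prop :=
  (∀ φ ∈ Λ, validOnIrreflPoint φ) ∧ (∀ n ≥ 1, MF.boxIter n MF.bot ∉ Λ) ∧
    ∃ n ≥ 1, MF.diaLe n (MF.box MF.bot) ∈ Λ

/-- The (expansions of the) fragment `ML_Φ`: the smallest set of modal formulas containing
all propositional variables and closed under applying the connectives given by the formulas in
`Φ` (i.e., substituting fragment formulas into a member of `Φ`). -/
inductive MLFrag (Φ : Set MF) : MF → Prop
  | var (n : ℕ) : MLFrag Φ (MF.var n)
  | app (φ : MF) (hφ : φ ∈ Φ) (σ : ℕ → MF) (hσ : ∀ n, MLFrag Φ (σ n)) :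
      MLFrag Φ (φ.subst σ)

/-- Expressive containment `ML_Φ ≼^Λ ML_Ψ`. -/
def exprLe (Λ : Set MF) (Φ Ψ : Set MF) : Prop :=
  ∀ φ, MLFrag Φ φ → ∃ ψ, MLFrag Ψ ψ ∧ (φ.iff ψ) ∈ Λ

/-- Expressive equivalence with respect to `Λ`. -/
def exprEq (Λ : Set MF) (Φ Ψ : Set MF) : Prop := exprLe Λ Φ Ψ ∧ exprLe Λ Ψ Φ

/-- The minimal normal modal logic `K`: (semantically) the set of formulas valid in all
Kripke models. -/
def KLogic : Set MF :=
  {φ | ∀ (W : Type) (R : W → W → Prop) (V : ℕ → W → Prop) (w : W), MF.sat R V φ w}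

/-! ### Boolean functions and clones -/

/-- A Boolean function of positive arity. -/
structure BFun : Type where
  arity : ℕ
  arity_pos : 0 < arity
  eval : (Fin arity → Bool) → Bool

/-- A Boolean clone: a set of Boolean functions containing all projections and
closed under composition. -/
def IsClone (C : Set BFun) : Prop :=
  (∀ (n : ℕ) (hn : 0 < n) (k : Fin n), (⟨n, hn, fun v => v k⟩ : BFun) ∈ C) ∧
  (∀ f ∈ C, ∀ (m : ℕ) (hm : 0 < m) (g : Fin (BFun.arity f) → (Fin m → Bool) → Bool),
    (∀ i, (⟨m, hm, g i⟩ : BFun) ∈ C) →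
    (⟨m, hm, fun v => f.eval (fun i => g i v)⟩ : BFun) ∈ C)

/-- The clone generated by a set of Boolean functions. -/
def cloneGen (O : Set BFun) : Set BFun := ⋂₀ {C : Set BFun | IsClone C ∧ O ⊆ C}

/-- `O ≼ O'`: the clone generated by `O` is contained in the clone generated by `O'`. -/
def cloneLe (O O' : Set BFun) : Prop := cloneGen O ⊆ cloneGen O'

/-- The constant-true unary Boolean function. -/
def bfTop : BFun := ⟨1, Nat.one_pos, fun _ => true⟩
/-- The constant-false unary Boolean function. -/
def bfBot : BFun := ⟨1, Nat.one_pos, fun _ => false⟩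
/-- Negation. -/
def bfNot : BFun := ⟨1, Nat.one_pos, fun v => !(v 0)⟩
/-- Binary conjunction. -/
def bfAnd : BFun := ⟨2, Nat.succ_pos 1, fun v => v 0 && v 1⟩
/-- Binary disjunction. -/
def bfOr : BFun := ⟨2, Nat.succ_pos 1, fun v => v 0 || v 1⟩
/-- Ternary exclusive or `x ⊕ y ⊕ z`. -/
def bf3Xor : BFun := ⟨3, Nat.succ_pos 2, fun v => (v 0).xor ((v 1).xor (v 2))⟩
/-- `oxor(x,y,z) = x ∨ (y ⊕ z)`. -/
def bfOxor : BFun := ⟨3, Nat.succ_pos 2, fun v => v 0 || ((v 1).xor (v 2))⟩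
/-- `aimp(x,y,z) = x ∧ (y → z)`. -/
def bfAimp : BFun := ⟨3, Nat.succ_pos 2, fun v => v 0 && (!(v 1) || v 2)⟩

/-- The (purely propositional) formula `φ` defines the Boolean function `f`. -/
def definesBF (φ : MF) (f : BFun) : Prop :=
  φ.isProp ∧ ∀ v : ℕ → Bool, φ.propEval v = f.eval (fun i => v i.val)

/-- The generating set of formulas of the simple fragment `ML_{M ∪ O}`, where
`M ⊆ {◇,□}` is specified by the two Booleans `hd` (for `◇`) and `hb` (for `□`). -/
def MOgen (hd hb : Bool) (O : Set BFun) : Set MF :=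
  {φ | (hd = true ∧ φ = MF.dia (MF.var 0)) ∨ (hb = true ∧ φ = MF.box (MF.var 0)) ∨
    ∃ f ∈ O, definesBF φ f}

/-- `Clos^Λ_M(O)`: the set of Boolean functions `f` such that some propositional formula
defining `f` is `Λ`-equivalent to some `ML_{M ∪ O}`-formula. -/
def Clos (Λ : Set MF) (hd hb : Bool) (O : Set BFun) : Set BFun :=
  {f | ∃ φ ψ : MF, definesBF φ f ∧ MLFrag (MOgen hd hb O) ψ ∧ (φ.iff ψ) ∈ Λ}

/-- `β(Φ)`: the set of Boolean functions defined by propositional formulas in `Φ`. -/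
def betaBF (Φ : Set MF) : Set BFun := {f | ∃ φ ∈ Φ, definesBF φ f}

/-- A set of modal formulas is simple if each member is `◇x`, `□x`, or purely
propositional. -/
def IsSimpleSet (Φ : Set MF) : Prop :=
  ∀ φ ∈ Φ, (∃ n, φ = MF.dia (MF.var n)) ∨ (∃ n, φ = MF.box (MF.var n)) ∨ φ.isProp

/-- `Φ` is `M`-simple (with `M` given by `hd`, `hb`): simple, and the modal operators
among its members are exactly those in `M`. -/
def IsMSimpleSet (hd hb : Bool) (Φ : Set MF) : Prop :=
  IsSimpleSet Φ ∧ ((∃ n, MF.dia (MF.var n) ∈ Φ) ↔ hd = true) ∧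
    ((∃ n, MF.box (MF.var n) ∈ Φ) ↔ hb = true)

/-! ### Propositional fragments `PL_O` -/

/-- Formulas of the propositional fragment `PL_O`. -/
inductive PLF (O : Set BFun) : Type
  | var : ℕ → PLF O
  | app : (f : BFun) → f ∈ O → (Fin f.arity → PLF O) → PLF O

namespace PLF

variable {O : Set BFun}

/-- Evaluation of a `PL_O`-formula under a truth assignment. -/
def eval (v : ℕ → Bool) : PLF O → Bool
  | .var n => v n
  | .app f _ args => f.eval (fun i => (args i).eval v)

/-- The variables occurring in a `PL_O`-formula. -/
def pvars : PLF O → Set ℕ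
  | .var n => {n}
  | .app _ _ args => ⋃ i, (args i).pvars

/-- The set of subformulas of a `PL_O`-formula. -/
def subf : PLF O → Set (PLF O)
  | .var n => {PLF.var n}
  | .app f h args => insert (PLF.app f h args) (⋃ i, (args i).subf)

/-- `|φ|_dag`: the number of distinct subformulas. -/
noncomputable def dagSize (φ : PLF O) : ℕ := φ.subf.ncard

/-- Equivalence of propositional formulas. -/
def equivPLF (φ ψ : PLF O) : Prop := ∀ v, φ.eval v = ψ.eval v

/-- `φ` fits the labeled example `(V, lab)`. -/
def fits (φ : PLF O) (e : (ℕ → Bool) × Bool) : Prop := φ.eval e.1 = e.2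

end PLF

/-- `E` uniquely characterizes `φ` with respect to the class `L` of formulas. -/
def uniqCharPL {O : Set BFun} (φ : PLF O) (L : Set (PLF O))
    (E : Set ((ℕ → Bool) × Bool)) : Prop :=
  (∀ e ∈ E, φ.fits e) ∧ ∀ ψ ∈ L, (∀ e ∈ E, ψ.fits e) → φ.equivPLF ψ

/-! ### Concept classes and PC-reductions -/

/-- A concept `c` fits the labeled example `(e, lab)`. -/
def ccFits {C : Type*} {E : Type*} (l : C → Set E) (c : C) (e : E × Bool) : Prop :=
  e.1 ∈ l c ↔ e.2 = true

/-- `S` uniquely characterizes the concept `c` within the concept class given by `l`. -/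
def ccUniqChar {C : Type*} {E : Type*} (l : C → Set E) (c : C) (S : Set (E × Bool)) : Prop :=
  (∀ e ∈ S, ccFits l c e) ∧ ∀ c', (∀ e ∈ S, ccFits l c' e) → l c' = l c

/-- A PC-reduction between concept classes. -/
structure PCRed {C1 : Type*} {E1 : Type*} {C2 : Type*} {E2 : Type*}
    (l1 : C1 → Set E1) (l2 : C2 → Set E2) where
  fc : C1 → C2
  he : E1 → E2
  cond1 : ∀ c e, e ∈ l1 c ↔ he e ∈ l2 (fc c)
  cond2 : ∀ e : E2, (∀ c, e ∈ l2 (fc c)) ∨ (∀ c, e ∉ l2 (fc c)) ∨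
    ∃ e' : E1, {c | e ∈ l2 (fc c)} = {c | e' ∈ l1 c}

/-- Extend an assignment on `PROP` to all variables (by `false` elsewhere). -/
def extAssign (PROP : Finset ℕ) (v : {x // x ∈ PROP} → Bool) : ℕ → Bool :=
  fun n => if h : n ∈ PROP then v ⟨n, h⟩ else false

/-- The concept class `PL_O[PROP]`: concepts are `PL_O`-formulas with variables in `PROP`,
examples are truth assignments on `PROP`. -/
def plSem (O : Set BFun) (PROP : Finset ℕ) :
    {φ : PLF O // φ.pvars ⊆ ↑PROP} → Set ({x // x ∈ PROP} → Bool) :=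
  fun φ => {v | φ.1.eval (extAssign PROP v) = true}

/-! ### Simple modal fragments as syntax, and finite pointed Kripke models -/

/-- Formulas of the simple modal fragment `ML_{M ∪ O}` (as a syntax): Boolean connectives
from `O`, plus `◇` if `hd` and `□` if `hb`. -/
inductive MLF (O : Set BFun) (hd hb : Bool) : Type
  | var : ℕ → MLF O hd hb
  | app : (f : BFun) → f ∈ O → (Fin f.arity → MLF O hd hb) → MLF O hd hb
  | dia : hd = true → MLF O hd hb → MLF O hd hb
  | box : hb = true → MLF O hd hb → MLF O hd hb

/-- Propositional application of a Boolean function to propositions. -/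
def BFun.evalP (f : BFun) (P : Fin f.arity → Prop) : Prop :=
  f.eval (fun i => @decide (P i) (Classical.propDecidable _)) = true

namespace MLF

variable {O : Set BFun} {hd hb : Bool}

/-- Kripke satisfaction for simple-fragment formulas. -/
def msat {W : Type} (R : W → W → Prop) (V : ℕ → W → Prop) :
    MLF O hd hb → W → Prop
  | .var n, w => V n w
  | .app f _ args, w => f.evalP (fun i => msat R V (args i) w)
  | .dia _ φ, w => ∃ u, R w u ∧ msat R V φ u
  | .box _ φ, w => ∀ u, R w u → msat R V φ u

/-- Variables of a simple-fragment formula. -/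
def mvars : MLF O hd hb → Set ℕ
  | .var n => {n}
  | .app _ _ args => ⋃ i, (args i).mvars
  | .dia _ φ => φ.mvars
  | .box _ φ => φ.mvars

end MLF

/-- A finite pointed Kripke model. -/
structure FPModel : Type 1 where
  W : Type
  fin : Finite W
  R : W → W → Prop
  V : ℕ → W → Prop
  pt : W

/-- The concept class `ML_{O,∘}[{p}]` (with `p` the variable `0`): concepts are
simple-fragment formulas over the single variable `p`, examples are finite pointed
Kripke models. -/
def mlSem (O : Set BFun) (hd hb : Bool) :
    {φ : MLF O hd hb // φ.mvars ⊆ {0}} → Set FPModel :=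
  fun φ => {M | MLF.msat M.R M.V φ.1 M.pt}

/-- Satisfaction of a modal formula in a finite pointed Kripke model. -/
def msatMF (M : FPModel) (φ : MF) : Prop := MF.sat M.R M.V φ M.pt

/-- A modal formula fits a labeled example (a finite pointed model with a label). -/
def fitsMF (φ : MF) (e : FPModel × Bool) : Prop := msatMF e.1 φ ↔ e.2 = true

/-- `K`-equivalence of modal formulas: truth at the same worlds of all Kripke models. -/
def KequivMF (φ ψ : MF) : Prop :=
  ∀ (W : Type) (R : W → W → Prop) (V : ℕ → W → Prop) (w : W),
    MF.sat R V φ w ↔ MF.sat R V ψ w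

/-- `E` uniquely characterizes `φ` relative to the fragment `L` (with respect to `K`). -/
def uniqCharMF (φ : MF) (L : Set MF) (E : Set (FPModel × Bool)) : Prop :=
  (∀ e ∈ E, fitsMF φ e) ∧ ∀ ψ ∈ L, (∀ e ∈ E, fitsMF ψ e) → KequivMF φ ψ

/-- `ML_Φ[P]`: the fragment generated by `Φ`, restricted to variables in `P`. -/
def fragSimple (Φ : Set MF) (P : Set ℕ) : Set MF :=
  {φ | MLFrag Φ φ ∧ φ.vars ⊆ P}

/-- `ML_{M∪O}[P]`. -/
def fragMO (hd hb : Bool) (O : Set BFun) (P : Set ℕ) : Set MF :=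
  fragSimple (MOgen hd hb O) P

/-- For a simple set `Φ`: the modal operators of `Φ` are among those specified by
`hd`, `hb`, and `β(Φ)` is contained in the clone generated by `O`. -/
def simpleLeOps (Φ : Set MF) (O : Set BFun) (hd hb : Bool) : Prop :=
  ((∃ n, MF.dia (MF.var n) ∈ Φ) → hd = true) ∧
  ((∃ n, MF.box (MF.var n) ∈ Φ) → hb = true) ∧
  cloneGen (betaBF Φ) ⊆ cloneGen O

/-- Decoding of a natural number as a labeled example (a finite pointed Kripke model with
a Boolean label). -/
def decodeEx (c : ℕ) : FPModel × Bool :=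
  match Denumerable.ofNat (ℕ × List (ℕ × ℕ) × List (ℕ × ℕ) × ℕ × ℕ) c with
  | (n, edges, val, pt, b) =>
    (⟨Fin (n + 1), inferInstance,
      fun u v => (u.val, v.val) ∈ edges,
      fun k w => (k, w.val) ∈ val,
      ⟨pt % (n + 1), Nat.mod_lt pt (Nat.succ_pos n)⟩⟩, b % 2 == 1)

def deltaMF (n : ℕ) : MF :=
  MF.and (MF.diaIter n MF.top) (MF.neg (MF.diaIter (n + 1) MF.top))

def PhiS (S : Set ℕ) : Set MF :=
  {φ | (∃ n ∈ S, φ = deltaMF (2 * n)) ∨ (∃ n ∉ S, φ = deltaMF (2 * n + 1))}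

namespace AuxStmt1

lemma subst_var (φ : MF) : φ.subst MF.var = φ := by
  induction φ <;> simp [MF.subst, *]

lemma diaIter_subst (n : ℕ) (φ : MF) (σ : ℕ → MF) :
    (MF.diaIter n φ).subst σ = MF.diaIter n (φ.subst σ) := by
  induction n <;> simp [MF.diaIter, MF.subst, *]

lemma sat_diaIter_congr {W : Type} (R : W → W → Prop) (V : ℕ → W → Prop) {φ ψ : MF}
    (h : ∀ u, MF.sat R V φ u ↔ MF.sat R V ψ u) (n : ℕ) (w : W) :
    MF.sat R V (MF.diaIter n φ) w ↔ MF.sat R V (MF.diaIter n ψ) w := by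
  induction n generalizing w with
  | zero => exact h w
  | succ n ih =>
      simp only [MF.diaIter, MF.sat]
      exact exists_congr fun u => and_congr_right fun _ => ih u

lemma sat_delta_subst {W : Type} (R : W → W → Prop) (V : ℕ → W → Prop)
    (k : ℕ) (σ : ℕ → MF) (w : W) :
    MF.sat R V ((deltaMF k).subst σ) w ↔ MF.sat R V (deltaMF k) w := by
  have htop : ∀ u, MF.sat R V (MF.top.subst σ) u ↔ MF.sat R V MF.top u := by
    intro u
    simp only [MF.top, MF.subst, MF.sat]
    constructor
    · intro _; exact em _
    · intro _; exact em _
  simp only [deltaMF, MF.subst, diaIter_subst, MF.sat]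
  exact and_congr (sat_diaIter_congr R V htop k w)
    (not_congr (sat_diaIter_congr R V htop (k + 1) w))

/-- Chain relation of length `m` on ℕ. -/
def chainR (m : ℕ) : ℕ → ℕ → Prop := fun a b => b = a + 1 ∧ b ≤ m

lemma sat_diaIter_top (m : ℕ) (V : ℕ → ℕ → Prop) (n : ℕ) :
    ∀ w ≤ m, (MF.sat (chainR m) V (MF.diaIter n MF.top) w ↔ w + n ≤ m) := by
  induction n with
  | zero =>
      intro w hw
      simp only [MF.diaIter, MF.top, MF.sat]
      exact iff_of_true (em _) (by omega)
  | succ n ih =>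
      intro w hw
      simp only [MF.diaIter, MF.sat]
      constructor
      · rintro ⟨u, ⟨rfl, hum⟩, hs⟩
        have := (ih (w + 1) hum).mp hs
        omega
      · intro h
        have h1 : w + 1 ≤ m := by omega
        exact ⟨w + 1, ⟨rfl, h1⟩, (ih (w + 1) h1).mpr (by omega)⟩

lemma sat_delta_chain (m k : ℕ) (V : ℕ → ℕ → Prop) :
    MF.sat (chainR m) V (deltaMF k) 0 ↔ m = k := by
  have h1 := sat_diaIter_top m V k 0 (Nat.zero_le m)
  have h2 : (∃ u, chainR m 0 u ∧ MF.sat (chainR m) V (MF.diaIter k MF.top) u) ↔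
      0 + (k + 1) ≤ m := sat_diaIter_top m V (k + 1) 0 (Nat.zero_le m)
  simp only [deltaMF, MF.sat, MF.diaIter]
  rw [h1, h2]
  omega

lemma delta_mem_frag {Φ : Set MF} {k : ℕ} (h : deltaMF k ∈ Φ) :
    MLFrag Φ (deltaMF k) := by
  have := MLFrag.app (Φ := Φ) (deltaMF k) h MF.var (fun n => MLFrag.var n)
  rwa [subst_var] at this

lemma kiff_sat {φ ψ : MF} (h : (φ.iff ψ) ∈ KLogic) {W : Type}
    (R : W → W → Prop) (V : ℕ → W → Prop) (w : W) :
    MF.sat R V φ w ↔ MF.sat R V ψ w := by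
  have := h W R V w
  simp only [MF.iff, MF.imp, MF.sat] at this
  tauto

/-- Key lemma: `δ_k` is not expressible in `ML_{Φ_{S'}}` when `k` avoids its index set. -/
lemma not_exprLe {S S' : Set ℕ} {k : ℕ} (hk : deltaMF k ∈ PhiS S)
    (hkodd : ∀ n ∈ S', k ≠ 2 * n) (hkeven : ∀ n ∉ S', k ≠ 2 * n + 1) :
    ¬ exprLe KLogic (PhiS S) (PhiS S') := by
  intro hle
  obtain ⟨ψ, hψfrag, hψiff⟩ := hle (deltaMF k) (delta_mem_frag hk)
  -- evaluate at the chain model of length k, root 0, valuation constantly False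
  have hsatδ : MF.sat (chainR k) (fun _ _ => False) (deltaMF k) 0 :=
    (sat_delta_chain k k _).mpr rfl
  have hsatψ : MF.sat (chainR k) (fun _ _ => False) ψ 0 :=
    (kiff_sat hψiff _ _ _).mp hsatδ
  cases hψfrag with
  | var n => exact hsatψ
  | app φ hφ σ hσ =>
      -- φ = deltaMF j with j ≠ k
      have hj : ∃ j, φ = deltaMF j ∧ j ≠ k := by
        rcases hφ with ⟨n, hn, rfl⟩ | ⟨n, hn, rfl⟩
        · exact ⟨2 * n, rfl, fun h => hkodd n hn h.symm⟩
        · exact ⟨2 * n + 1, rfl, fun h => hkeven n hn h.symm⟩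
      obtain ⟨j, rfl, hjk⟩ := hj
      have := (sat_delta_subst (chainR k) (fun _ _ => False) j σ 0).mp hsatψ
      have := (sat_delta_chain k j _).mp this
      exact hjk this.symm

lemma main (S S' : Set ℕ) (hne : S ≠ S') : ¬ exprLe KLogic (PhiS S) (PhiS S') := by
  have : ∃ n, (n ∈ S ∧ n ∉ S') ∨ (n ∉ S ∧ n ∈ S') := by
    by_contra h
    push_neg at h
    apply hne
    ext n
    have := h n
    tauto
  obtain ⟨n, ⟨hnS, hnS'⟩ | ⟨hnS, hnS'⟩⟩ := this
  · refine not_exprLe (S := S) (k := 2 * n) (Or.inl ⟨n, hnS, rfl⟩) ?_ ?_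
    · intro m hm h
      have : n = m := by omega
      exact hnS' (this ▸ hm)
    · intro m _ h; omega
  · refine not_exprLe (S := S) (k := 2 * n + 1) (Or.inr ⟨n, hnS, rfl⟩) ?_ ?_
    · intro m _ h; omega
    · intro m hm h
      have : n = m := by omega
      exact hm (this ▸ hnS')

end AuxStmt1

theorem stmt1 :
    (∀ S S' : Set ℕ, S ≠ S' → ¬ exprLe KLogic (PhiS S) (PhiS S')) ∧
    (∃ F : Set ℕ → Set MF, ∀ S S' : Set ℕ, S ≠ S' →
      ¬ exprLe KLogic (F S) (F S') ∧ ¬ exprLe KLogic (F S') (F S)) := by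
  refine ⟨AuxStmt1.main, PhiS, fun S S' hne => ⟨AuxStmt1.main S S' hne, AuxStmt1.main S' S hne.symm⟩⟩
end

section
/- Let Λ be a consistent normal modal logic of Type A (i.e., F_⊙ ⊨ Λ), let M ⊆ {◇,□}, and let C be any Boolean clone. Then Clos^Λ_M(C) = C; that is, Clos^Λ_M is the identity function on Boolean clones. -/
set_option maxHeartbeats 1000000

/-! ### Auxiliary lemmas for stmt2 -/

namespace MF

lemma subst_var_eq (φ : MF) : φ.subst MF.var = φ := by
  induction φ <;> simp [subst, *]

lemma propEval_subst' (σ : ℕ → MF) (v : ℕ → Bool) (φ : MF) :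
    (φ.subst σ).propEval v = φ.propEval (fun n => (σ n).propEval v) := by
  induction φ <;> simp [subst, propEval, *]

lemma sat_refl_point (v : ℕ → Bool) (φ : MF) :
    MF.sat (W := Unit) (fun _ _ => True) (fun n _ => v n = true) φ () ↔
      φ.propEval v = true := by
  induction φ with
  | var n => simp [sat, propEval]
  | neg φ ih => simp [sat, propEval, ih]
  | and φ ψ ih1 ih2 => simp [sat, propEval, ih1, ih2]
  | or φ ψ ih1 ih2 => simp [sat, propEval, ih1, ih2]
  | dia φ ih => simp [sat, propEval, ih]
  | box φ ih => simp [sat, propEval, ih]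

end MF

/-- Disjunction of a list of formulas (empty = ⊥). -/
def bigOr : List MF → MF
  | [] => MF.bot
  | φ :: l => MF.or φ (bigOr l)

/-- Conjunction of a list of formulas (empty = ⊤). -/
def bigAnd : List MF → MF
  | [] => MF.top
  | φ :: l => MF.and φ (bigAnd l)

lemma bigOr_isProp (l : List MF) (h : ∀ φ ∈ l, φ.isProp) : (bigOr l).isProp := by
  induction l with
  | nil => simp [bigOr, MF.bot, MF.isProp]
  | cons φ l ih =>
    exact ⟨h φ (by simp), ih fun ψ hψ => h ψ (by simp [hψ])⟩

lemma bigAnd_isProp (l : List MF) (h : ∀ φ ∈ l, φ.isProp) : (bigAnd l).isProp := by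
  induction l with
  | nil => simp [bigAnd, MF.top, MF.isProp]
  | cons φ l ih =>
    exact ⟨h φ (by simp), ih fun ψ hψ => h ψ (by simp [hψ])⟩

lemma bigOr_eval (l : List MF) (v : ℕ → Bool) :
    (bigOr l).propEval v = true ↔ ∃ φ ∈ l, φ.propEval v = true := by
  induction l with
  | nil => simp [bigOr, MF.bot, MF.propEval]
  | cons φ l ih => simp [bigOr, MF.propEval, ih]

lemma bigAnd_eval (l : List MF) (v : ℕ → Bool) :
    (bigAnd l).propEval v = true ↔ ∀ φ ∈ l, φ.propEval v = true := by
  induction l with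
  | nil => simp [bigAnd, MF.top, MF.propEval]
  | cons φ l ih => simp [bigAnd, MF.propEval, ih]

/-- The minterm corresponding to the assignment `u`. -/
def minterm (n : ℕ) (u : Fin n → Bool) : MF :=
  bigAnd (List.ofFn (fun i : Fin n => if u i then MF.var i.val else MF.neg (MF.var i.val)))

lemma minterm_isProp (n : ℕ) (u : Fin n → Bool) : (minterm n u).isProp := by
  apply bigAnd_isProp
  intro φ hφ
  rw [List.mem_ofFn] at hφ
  obtain ⟨i, rfl⟩ := hφ
  by_cases h : u i = true <;> simp [h, MF.isProp]

lemma minterm_eval (n : ℕ) (u : Fin n → Bool) (v : ℕ → Bool) :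
    (minterm n u).propEval v = true ↔ ∀ i : Fin n, v i.val = u i := by
  rw [minterm, bigAnd_eval]
  constructor
  · intro h i
    have := h _ ((List.mem_ofFn).mpr ⟨i, rfl⟩)
    by_cases hu : u i = true <;> simp [hu, MF.propEval] at this <;> simp [hu, this]
  · intro h φ hφ
    rw [List.mem_ofFn] at hφ
    obtain ⟨i, rfl⟩ := hφ
    by_cases hu : u i = true <;> simp [hu, MF.propEval, h i]

/-- A DNF formula defining a Boolean function. -/
noncomputable def dnfOf (f : BFun) : MF :=
  bigOr ((((Finset.univ : Finset (Fin f.arity → Bool)).filter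
    (fun u => f.eval u = true)).toList).map (minterm f.arity))

lemma dnfOf_defines (f : BFun) : definesBF (dnfOf f) f := by
  constructor
  · apply bigOr_isProp
    intro φ hφ
    rw [List.mem_map] at hφ
    obtain ⟨u, _, rfl⟩ := hφ
    exact minterm_isProp _ _
  · intro v
    have key : (dnfOf f).propEval v = true ↔ f.eval (fun i => v i.val) = true := by
      rw [dnfOf, bigOr_eval]
      constructor
      · rintro ⟨φ, hφ, hval⟩
        rw [List.mem_map] at hφ
        obtain ⟨u, hu, rfl⟩ := hφ
        rw [Finset.mem_toList, Finset.mem_filter] at hu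
        rw [minterm_eval] at hval
        have : (fun i : Fin f.arity => v i.val) = u := funext hval
        rw [this]
        exact hu.2
      · intro h
        refine ⟨minterm f.arity (fun i => v i.val), ?_, ?_⟩
        · exact List.mem_map.mpr ⟨_, Finset.mem_toList.mpr (Finset.mem_filter.mpr ⟨Finset.mem_univ _, h⟩), rfl⟩
        · rw [minterm_eval]; intro i; rfl
    cases h : f.eval (fun i => v i.val) with
    | true => exact key.mpr h
    | false =>
      by_contra hc
      have := key.mp (by revert hc; cases (dnfOf f).propEval v <;> simp [h])
      rw [h] at this; exact absurd this (by simp)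

/-- Fragment formulas, read propositionally with variables remapped to `Fin n`, give
functions in the clone. -/
lemma frag_in_clone {C : Set BFun} (hC : IsClone C) {hd hb : Bool} {ψ : MF}
    (hψ : MLFrag (MOgen hd hb C) ψ) (n : ℕ) (hn : 0 < n) (ρ : ℕ → Fin n) :
    (⟨n, hn, fun w => ψ.propEval (fun m => w (ρ m))⟩ : BFun) ∈ C := by
  induction hψ with
  | var m => exact hC.1 n hn (ρ m)
  | app χ hχ σ hσ ih =>
    rcases hχ with ⟨-, rfl⟩ | ⟨-, rfl⟩ | ⟨g, hg, hdef⟩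
    · simpa [MF.subst, MF.propEval] using ih 0
    · simpa [MF.subst, MF.propEval] using ih 0
    · have hcomp := hC.2 g hg n hn
        (fun i w => (σ i.val).propEval (fun m => w (ρ m))) (fun i => ih i.val)
      have key : (fun w : Fin n → Bool => (χ.subst σ).propEval (fun m => w (ρ m)))
          = fun w => g.eval (fun i => (σ i.val).propEval (fun m => w (ρ m))) := by
        funext w
        rw [MF.propEval_subst', hdef.2]
      rw [key]
      exact hcomp

theorem stmt2 (Λ : Set MF) (hΛ : NormalLogic Λ) (hcons : Λ ≠ Set.univ)
    (hA : TypeA Λ) (hd hb : Bool) (C : Set BFun) (hC : IsClone C) :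
    Clos Λ hd hb C = C := by
  ext f
  constructor
  · rintro ⟨φ, ψ, hφ, hψ, hiff⟩
    have heq : ∀ v : ℕ → Bool, φ.propEval v = ψ.propEval v := by
      intro v
      have h := hA _ hiff (fun n => v n = true)
      have h' := (MF.sat_refl_point v (φ.iff ψ)).mp h
      cases ha : φ.propEval v <;> cases hb' : ψ.propEval v <;>
        simp_all [MF.iff, MF.imp, MF.propEval]
    obtain ⟨n, hn, fe⟩ := f
    obtain ⟨-, hφev⟩ := hφ
    set ρ : ℕ → Fin n := fun m => if h : m < n then ⟨m, h⟩ else ⟨0, hn⟩ with hρ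
    have hmem := frag_in_clone hC hψ n hn ρ
    have key : (fun w : Fin n → Bool => ψ.propEval (fun m => w (ρ m))) = fe := by
      funext w
      rw [← heq, hφev]
      congr 1
      funext i
      simp [hρ, i.isLt]
    rw [key] at hmem
    exact hmem
  · intro hf
    have hdef := dnfOf_defines f
    have hmem : dnfOf f ∈ MOgen hd hb C := Or.inr (Or.inr ⟨f, hf, hdef⟩)
    have hfrag := MLFrag.app (dnfOf f) hmem MF.var (fun n => MLFrag.var n)
    rw [MF.subst_var_eq] at hfrag
    refine ⟨dnfOf f, dnfOf f, hdef, hfrag, hΛ.taut _ ⟨?_, ?_⟩⟩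
    · exact ⟨⟨hdef.1, hdef.1⟩, hdef.1, hdef.1⟩
    · intro v
      cases h : (dnfOf f).propEval v <;>
        simp [MF.iff, MF.imp, MF.propEval, h]
end

section
/- Let Λ be a consistent normal modal logic of Type B (i.e., F_• ⊨ Λ and Λ ⊢ □^n⊥ for some n ≥ 1), let M ⊆ {◇,□}, and let C be any Boolean clone. Then Clos^Λ_M(C) equals: C if M = ∅; the clone generated by C ∪ {⊥} if M = {◇}; the clone generated by C ∪ {⊤} if M = {□}; and the clone generated by C ∪ {⊤,⊥} if M = {◇,□}. Here ⊤ and ⊥ denote the constant unary Boolean functions. -/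
set_option maxHeartbeats 1000000

namespace StmtAux

/-! ### Boolean evaluation at the irreflexive point -/

def bval (v : ℕ → Bool) : MF → Bool
  | .var n => v n
  | .neg φ => !(bval v φ)
  | .and φ ψ => bval v φ && bval v ψ
  | .or φ ψ => bval v φ || bval v ψ
  | .dia _ => false
  | .box _ => true

lemma bval_subst (v : ℕ → Bool) (σ : ℕ → MF) :
    ∀ χ, bval v (χ.subst σ) = bval (fun n => bval v (σ n)) χ
  | .var n => rfl
  | .neg φ => by simp [MF.subst, bval, bval_subst v σ φ]
  | .and φ ψ => by simp [MF.subst, bval, bval_subst v σ φ, bval_subst v σ ψ]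
  | .or φ ψ => by simp [MF.subst, bval, bval_subst v σ φ, bval_subst v σ ψ]
  | .dia φ => rfl
  | .box φ => rfl

lemma bval_eq_propEval (v : ℕ → Bool) : ∀ χ, χ.isProp → bval v χ = χ.propEval v
  | .var _, _ => rfl
  | .neg φ, h => by simp [bval, MF.propEval, bval_eq_propEval v φ h]
  | .and φ ψ, h => by
      simp [bval, MF.propEval, bval_eq_propEval v φ h.1, bval_eq_propEval v ψ h.2]
  | .or φ ψ, h => by
      simp [bval, MF.propEval, bval_eq_propEval v φ h.1, bval_eq_propEval v ψ h.2]

lemma sat_irrefl (u : ℕ → Bool) :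
    ∀ χ, (MF.sat (W := Unit) (fun _ _ => False) (fun n _ => u n = true) χ () ↔ bval u χ = true)
  | .var n => Iff.rfl
  | .neg φ => by simp [MF.sat, bval, sat_irrefl u φ]
  | .and φ ψ => by simp [MF.sat, bval, sat_irrefl u φ, sat_irrefl u ψ]
  | .or φ ψ => by simp [MF.sat, bval, sat_irrefl u φ, sat_irrefl u ψ]
  | .dia φ => by simp [MF.sat, bval]
  | .box φ => by simp [MF.sat, bval]

/-! ### Substitution lemmas -/

lemma subst_id : ∀ χ : MF, χ.subst (fun n => MF.var n) = χ
  | .var n => rfl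
  | .neg φ => by simp [MF.subst, subst_id φ]
  | .and φ ψ => by simp [MF.subst, subst_id φ, subst_id ψ]
  | .or φ ψ => by simp [MF.subst, subst_id φ, subst_id ψ]
  | .dia φ => by simp [MF.subst, subst_id φ]
  | .box φ => by simp [MF.subst, subst_id φ]

lemma subst_comp (σ τ : ℕ → MF) :
    ∀ χ : MF, (χ.subst σ).subst τ = χ.subst (fun n => (σ n).subst τ)
  | .var n => rfl
  | .neg φ => by simp [MF.subst, subst_comp σ τ φ]
  | .and φ ψ => by simp [MF.subst, subst_comp σ τ φ, subst_comp σ τ ψ]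
  | .or φ ψ => by simp [MF.subst, subst_comp σ τ φ, subst_comp σ τ ψ]
  | .dia φ => by simp [MF.subst, subst_comp σ τ φ]
  | .box φ => by simp [MF.subst, subst_comp σ τ φ]

lemma isProp_subst (σ : ℕ → MF) (hσ : ∀ n, (σ n).isProp) :
    ∀ χ : MF, χ.isProp → (χ.subst σ).isProp
  | .var n, _ => hσ n
  | .neg φ, h => isProp_subst σ hσ φ h
  | .and φ ψ, h => ⟨isProp_subst σ hσ φ h.1, isProp_subst σ hσ ψ h.2⟩
  | .or φ ψ, h => ⟨isProp_subst σ hσ φ h.1, isProp_subst σ hσ ψ h.2⟩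

lemma propEval_subst (v : ℕ → Bool) (σ : ℕ → MF) :
    ∀ χ : MF, (χ.subst σ).propEval v = χ.propEval (fun n => (σ n).propEval v)
  | .var n => rfl
  | .neg φ => by simp [MF.subst, MF.propEval, propEval_subst v σ φ]
  | .and φ ψ => by simp [MF.subst, MF.propEval, propEval_subst v σ φ, propEval_subst v σ ψ]
  | .or φ ψ => by simp [MF.subst, MF.propEval, propEval_subst v σ φ, propEval_subst v σ ψ]
  | .dia φ => by simp [MF.subst, MF.propEval, propEval_subst v σ φ]
  | .box φ => by simp [MF.subst, MF.propEval, propEval_subst v σ φ]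

lemma iff_subst (A B : MF) (σ : ℕ → MF) :
    (A.iff B).subst σ = (A.subst σ).iff (B.subst σ) := rfl

end StmtAux

namespace StmtAux

section Logic

variable {Λ : Set MF} (hΛ : NormalLogic Λ)
include hΛ

def sub2 (A B : MF) : ℕ → MF := fun n => if n = 0 then A else B
def sub3 (A B C : MF) : ℕ → MF := fun n => if n = 0 then A else if n = 1 then B else C
def sub4 (A B C D : MF) : ℕ → MF :=
  fun n => if n = 0 then A else if n = 1 then B else if n = 2 then C else D

lemma taut_mem {χ : MF} (h1 : χ.isProp) (h2 : ∀ v, χ.propEval v = true) : χ ∈ Λ :=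
  hΛ.taut χ ⟨h1, h2⟩

lemma mono {A B : MF} (h : A.imp B ∈ Λ) : (MF.box A).imp (MF.box B) ∈ Λ :=
  hΛ.mp _ _ (hΛ.axK A B) (hΛ.nec _ h)

lemma iff_refl (A : MF) : A.iff A ∈ Λ := by
  have := hΛ.usubst ((MF.var 0).iff (MF.var 0)) (fun _ => A)
    (taut_mem hΛ (by simp [MF.iff, MF.imp, MF.isProp])
      (by intro v; cases h0 : v 0 <;> simp [MF.iff, MF.imp, MF.propEval, h0]))
  simpa [iff_subst, MF.subst] using this

lemma iff_intro {A B : MF} (h1 : A.imp B ∈ Λ) (h2 : B.imp A ∈ Λ) : A.iff B ∈ Λ := by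
  have t := hΛ.usubst ((MF.var 0).imp ((MF.var 1).imp (MF.and (MF.var 0) (MF.var 1))))
    (sub2 (A.imp B) (B.imp A))
    (taut_mem hΛ (by simp [MF.imp, MF.isProp])
      (by intro v; cases h0 : v 0 <;> cases h1 : v 1 <;> simp [MF.imp, MF.propEval, h0, h1]))
  simp only [MF.imp, MF.subst, sub2] at t
  exact hΛ.mp _ _ (hΛ.mp _ _ (by simpa [MF.iff, MF.imp] using t) h1) h2

lemma iff_mp {A B : MF} (h : A.iff B ∈ Λ) : A.imp B ∈ Λ := by
  have t := hΛ.usubst (((MF.var 0).iff (MF.var 1)).imp ((MF.var 0).imp (MF.var 1))) (sub2 A B)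
    (taut_mem hΛ (by simp [MF.iff, MF.imp, MF.isProp])
      (by intro v; cases h0 : v 0 <;> cases h1 : v 1 <;> simp [MF.iff, MF.imp, MF.propEval, h0, h1]))
  exact hΛ.mp _ _ (by simpa [MF.iff, MF.imp, MF.subst, sub2] using t) h

lemma iff_mpr {A B : MF} (h : A.iff B ∈ Λ) : B.imp A ∈ Λ := by
  have t := hΛ.usubst (((MF.var 0).iff (MF.var 1)).imp ((MF.var 1).imp (MF.var 0))) (sub2 A B)
    (taut_mem hΛ (by simp [MF.iff, MF.imp, MF.isProp])
      (by intro v; cases h0 : v 0 <;> cases h1 : v 1 <;> simp [MF.iff, MF.imp, MF.propEval, h0, h1]))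
  exact hΛ.mp _ _ (by simpa [MF.iff, MF.imp, MF.subst, sub2] using t) h

lemma iff_symm {A B : MF} (h : A.iff B ∈ Λ) : B.iff A ∈ Λ :=
  iff_intro hΛ (iff_mpr hΛ h) (iff_mp hΛ h)

lemma imp_trans {A B C : MF} (h1 : A.imp B ∈ Λ) (h2 : B.imp C ∈ Λ) : A.imp C ∈ Λ := by
  have t := hΛ.usubst (((MF.var 0).imp (MF.var 1)).imp
      (((MF.var 1).imp (MF.var 2)).imp ((MF.var 0).imp (MF.var 2)))) (sub3 A B C)
    (taut_mem hΛ (by simp [MF.imp, MF.isProp])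
      (by intro v; cases h0 : v 0 <;> cases h1 : v 1 <;> cases h2 : v 2 <;>
        simp [MF.imp, MF.propEval, h0, h1, h2]))
  exact hΛ.mp _ _ (hΛ.mp _ _ (by simpa [MF.iff, MF.imp, MF.subst, sub3] using t) h1) h2

lemma iff_trans {A B C : MF} (h1 : A.iff B ∈ Λ) (h2 : B.iff C ∈ Λ) : A.iff C ∈ Λ :=
  iff_intro hΛ (imp_trans hΛ (iff_mp hΛ h1) (iff_mp hΛ h2))
    (imp_trans hΛ (iff_mpr hΛ h2) (iff_mpr hΛ h1))

lemma neg_cong {A B : MF} (h : A.iff B ∈ Λ) : (MF.neg A).iff (MF.neg B) ∈ Λ := by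
  have t := hΛ.usubst (((MF.var 0).iff (MF.var 1)).imp
      ((MF.neg (MF.var 0)).iff (MF.neg (MF.var 1)))) (sub2 A B)
    (taut_mem hΛ (by simp [MF.iff, MF.imp, MF.isProp])
      (by intro v; cases h0 : v 0 <;> cases h1 : v 1 <;> simp [MF.iff, MF.imp, MF.propEval, h0, h1]))
  exact hΛ.mp _ _ (by simpa [MF.iff, MF.imp, MF.subst, sub2] using t) h

lemma and_cong {A B C D : MF} (h1 : A.iff B ∈ Λ) (h2 : C.iff D ∈ Λ) :
    (MF.and A C).iff (MF.and B D) ∈ Λ := by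
  have t := hΛ.usubst (((MF.var 0).iff (MF.var 1)).imp
      (((MF.var 2).iff (MF.var 3)).imp
        ((MF.and (MF.var 0) (MF.var 2)).iff (MF.and (MF.var 1) (MF.var 3))))) (sub4 A B C D)
    (taut_mem hΛ (by simp [MF.iff, MF.imp, MF.isProp])
      (by intro v; cases h0 : v 0 <;> cases h1 : v 1 <;> cases h2 : v 2 <;> cases h3 : v 3 <;>
        simp [MF.iff, MF.imp, MF.propEval, h0, h1, h2, h3]))
  exact hΛ.mp _ _ (hΛ.mp _ _ (by simpa [MF.iff, MF.imp, MF.subst, sub4] using t) h1) h2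

lemma or_cong {A B C D : MF} (h1 : A.iff B ∈ Λ) (h2 : C.iff D ∈ Λ) :
    (MF.or A C).iff (MF.or B D) ∈ Λ := by
  have t := hΛ.usubst (((MF.var 0).iff (MF.var 1)).imp
      (((MF.var 2).iff (MF.var 3)).imp
        ((MF.or (MF.var 0) (MF.var 2)).iff (MF.or (MF.var 1) (MF.var 3))))) (sub4 A B C D)
    (taut_mem hΛ (by simp [MF.iff, MF.imp, MF.isProp])
      (by intro v; cases h0 : v 0 <;> cases h1 : v 1 <;> cases h2 : v 2 <;> cases h3 : v 3 <;>
        simp [MF.iff, MF.imp, MF.propEval, h0, h1, h2, h3]))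
  exact hΛ.mp _ _ (hΛ.mp _ _ (by simpa [MF.iff, MF.imp, MF.subst, sub4] using t) h1) h2

lemma box_cong {A B : MF} (h : A.iff B ∈ Λ) : (MF.box A).iff (MF.box B) ∈ Λ :=
  iff_intro hΛ (mono hΛ (iff_mp hΛ h)) (mono hΛ (iff_mpr hΛ h))

lemma dia_cong {A B : MF} (h : A.iff B ∈ Λ) : (MF.dia A).iff (MF.dia B) ∈ Λ :=
  iff_trans hΛ (hΛ.dual A)
    (iff_trans hΛ (neg_cong hΛ (box_cong hΛ (neg_cong hΛ h))) (iff_symm hΛ (hΛ.dual B)))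

lemma repl {σ τ : ℕ → MF} (h : ∀ n, (σ n).iff (τ n) ∈ Λ) :
    ∀ χ : MF, ((χ.subst σ).iff (χ.subst τ)) ∈ Λ
  | .var n => h n
  | .neg φ => neg_cong hΛ (repl h φ)
  | .and φ ψ => and_cong hΛ (repl h φ) (repl h ψ)
  | .or φ ψ => or_cong hΛ (repl h φ) (repl h ψ)
  | .dia φ => dia_cong hΛ (repl h φ)
  | .box φ => box_cong hΛ (repl h φ)

lemma iff_of_eval {A B : MF} (hA : A.isProp) (hB : B.isProp)
    (h : ∀ v, A.propEval v = B.propEval v) : A.iff B ∈ Λ := by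
  refine taut_mem hΛ (by simp [MF.iff, MF.imp, MF.isProp, hA, hB]) ?_
  intro v
  cases hv : A.propEval v <;>
    simp [MF.iff, MF.imp, MF.propEval, hv, (h v).symm.trans hv]

lemma box_mono_iter {A B : MF} (h : A.imp B ∈ Λ) :
    ∀ k, (MF.boxIter k A).imp (MF.boxIter k B) ∈ Λ
  | 0 => h
  | k + 1 => mono hΛ (box_mono_iter h k)

lemma boxIter_mem {n : ℕ} (hn : MF.boxIter n MF.bot ∈ Λ) {A : MF}
    (hA : MF.bot.imp A ∈ Λ) : MF.boxIter n A ∈ Λ :=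
  hΛ.mp _ _ (box_mono_iter hΛ hA n) hn

lemma boxn_var_mem {n : ℕ} (hn : MF.boxIter n MF.bot ∈ Λ) : MF.boxIter n (MF.var 0) ∈ Λ :=
  boxIter_mem hΛ hn (taut_mem hΛ (by simp [MF.bot, MF.imp, MF.isProp])
    (by intro v; cases h0 : v 0 <;> simp [MF.bot, MF.imp, MF.propEval, h0]))

lemma neg_dian_mem {n : ℕ} (hn : MF.boxIter n MF.bot ∈ Λ) :
    MF.neg (MF.diaIter n (MF.var 0)) ∈ Λ := by
  have D : ∀ k, ((MF.boxIter k (MF.neg (MF.var 0))).imp (MF.neg (MF.diaIter k (MF.var 0)))) ∈ Λ := by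
    intro k
    induction k with
    | zero =>
        exact taut_mem hΛ (by simp [MF.imp, MF.isProp, MF.boxIter, MF.diaIter])
          (by intro v; cases h0 : v 0 <;> simp [MF.imp, MF.propEval, h0, MF.boxIter, MF.diaIter])
    | succ k ih =>
        have s1 := mono hΛ ih
        have hdual := hΛ.dual (MF.diaIter k (MF.var 0))
        have t := hΛ.usubst (((MF.var 0).iff (MF.neg (MF.var 1))).imp
            ((MF.var 1).imp (MF.neg (MF.var 0))))
          (sub2 (MF.dia (MF.diaIter k (MF.var 0))) (MF.box (MF.neg (MF.diaIter k (MF.var 0)))))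
          (taut_mem hΛ (by simp [MF.iff, MF.imp, MF.isProp])
            (by intro v; cases h0 : v 0 <;> cases h1 : v 1 <;>
              simp [MF.iff, MF.imp, MF.propEval, h0, h1]))
        have s2 := hΛ.mp _ _ (by simpa [MF.iff, MF.imp, MF.subst, sub2] using t) hdual
        exact imp_trans hΛ s1 s2
  have hb : MF.boxIter n (MF.neg (MF.var 0)) ∈ Λ :=
    boxIter_mem hΛ hn (taut_mem hΛ (by simp [MF.bot, MF.imp, MF.isProp])
      (by intro v; cases h0 : v 0 <;> simp [MF.bot, MF.imp, MF.propEval, h0]))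
  exact hΛ.mp _ _ (D n) hb

lemma bot_iff_of_neg {A : MF} (h : MF.neg A ∈ Λ) : MF.bot.iff A ∈ Λ := by
  have t := hΛ.usubst ((MF.neg (MF.var 1)).imp (MF.bot.iff (MF.var 1))) (sub2 (MF.var 0) A)
    (taut_mem hΛ (by simp [MF.bot, MF.iff, MF.imp, MF.isProp])
      (by intro v; cases h0 : v 0 <;> cases h1 : v 1 <;>
        simp [MF.bot, MF.iff, MF.imp, MF.propEval, h0, h1]))
  exact hΛ.mp _ _ (by simpa [MF.iff, MF.imp, MF.subst, sub2, MF.bot] using t) h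

lemma top_iff_of {A : MF} (h : A ∈ Λ) : MF.top.iff A ∈ Λ := by
  have t := hΛ.usubst ((MF.var 1).imp (MF.top.iff (MF.var 1))) (sub2 (MF.var 0) A)
    (taut_mem hΛ (by simp [MF.top, MF.iff, MF.imp, MF.isProp])
      (by intro v; cases h0 : v 0 <;> cases h1 : v 1 <;>
        simp [MF.top, MF.iff, MF.imp, MF.propEval, h0, h1]))
  exact hΛ.mp _ _ (by simpa [MF.iff, MF.imp, MF.subst, sub2, MF.top] using t) h

end Logic

end StmtAux

namespace StmtAux

/-! ### Canonical propositional formulas for Boolean functions -/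

def bigAnd : List MF → MF
  | [] => MF.top
  | χ :: l => MF.and χ (bigAnd l)

def bigOr : List MF → MF
  | [] => MF.bot
  | χ :: l => MF.or χ (bigOr l)

def lit (i : ℕ) (b : Bool) : MF := if b then MF.var i else MF.neg (MF.var i)

def termFor {n : ℕ} (a : Fin n → Bool) : MF :=
  bigAnd ((List.finRange n).map (fun i => lit i.val (a i)))

noncomputable def mkProp (f : BFun) : MF :=
  bigOr ((((Finset.univ : Finset (Fin f.arity → Bool)).filter
    (fun a => f.eval a = true)).toList).map termFor)

lemma isProp_bigAnd {l : List MF} (h : ∀ χ ∈ l, χ.isProp) : (bigAnd l).isProp := by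
  induction l with
  | nil => simp [bigAnd, MF.top, MF.isProp]
  | cons χ l ih =>
      exact ⟨h χ (by simp), ih (fun ψ hψ => h ψ (by simp [hψ]))⟩

lemma isProp_bigOr {l : List MF} (h : ∀ χ ∈ l, χ.isProp) : (bigOr l).isProp := by
  induction l with
  | nil => simp [bigOr, MF.bot, MF.isProp]
  | cons χ l ih =>
      exact ⟨h χ (by simp), ih (fun ψ hψ => h ψ (by simp [hψ]))⟩

lemma isProp_lit (i : ℕ) (b : Bool) : (lit i b).isProp := by
  cases b <;> simp [lit, MF.isProp]

lemma isProp_termFor {n : ℕ} (a : Fin n → Bool) : (termFor a).isProp :=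
  isProp_bigAnd (by simp +contextual [isProp_lit])

lemma isProp_mkProp (f : BFun) : (mkProp f).isProp :=
  isProp_bigOr (by simp +contextual [isProp_termFor])

lemma eval_bigAnd (v : ℕ → Bool) (l : List MF) :
    ((bigAnd l).propEval v = true) ↔ ∀ χ ∈ l, χ.propEval v = true := by
  induction l with
  | nil => simp [bigAnd, MF.top, MF.propEval]
  | cons χ l ih => simp [bigAnd, MF.propEval, ih]

lemma eval_bigOr (v : ℕ → Bool) (l : List MF) :
    ((bigOr l).propEval v = true) ↔ ∃ χ ∈ l, χ.propEval v = true := by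
  induction l with
  | nil => simp [bigOr, MF.bot, MF.propEval]
  | cons χ l ih => simp [bigOr, MF.propEval, ih]

lemma eval_lit (v : ℕ → Bool) (i : ℕ) (b : Bool) :
    ((lit i b).propEval v = true) ↔ v i = b := by
  cases b <;> simp [lit, MF.propEval]

lemma eval_termFor (v : ℕ → Bool) {n : ℕ} (a : Fin n → Bool) :
    ((termFor a).propEval v = true) ↔ ∀ i : Fin n, v i.val = a i := by
  simp [termFor, eval_bigAnd, eval_lit, List.mem_finRange]

lemma defines_mkProp (f : BFun) : definesBF (mkProp f) f := by
  refine ⟨isProp_mkProp f, ?_⟩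
  intro v
  rw [Bool.eq_iff_iff]
  simp only [mkProp, eval_bigOr, List.mem_map, Finset.mem_toList, Finset.mem_filter,
    Finset.mem_univ, true_and]
  constructor
  · rintro ⟨χ, ⟨a, ha, rfl⟩, hev⟩
    have : (fun i : Fin f.arity => v i.val) = a := funext fun i => (eval_termFor v a).1 hev i
    rw [this]; exact ha
  · intro h
    exact ⟨termFor (fun i : Fin f.arity => v i.val), ⟨_, h, rfl⟩,
      (eval_termFor v _).2 fun i => rfl⟩

/-! ### Fragment lemmas -/

lemma frag_subst {Φ : Set MF} {ψ : MF} (h : MLFrag Φ ψ) (τ : ℕ → MF)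
    (hτ : ∀ n, MLFrag Φ (τ n)) : MLFrag Φ (ψ.subst τ) := by
  induction h with
  | var n => exact hτ n
  | app φ hφ σ hσ ih =>
      rw [subst_comp]
      exact MLFrag.app φ hφ _ ih

lemma frag_dia {Φ : Set MF} (hΦ : MF.dia (MF.var 0) ∈ Φ) {ψ : MF} (h : MLFrag Φ ψ) :
    MLFrag Φ (MF.dia ψ) :=
  MLFrag.app _ hΦ (fun _ => ψ) (fun _ => h)

lemma frag_box {Φ : Set MF} (hΦ : MF.box (MF.var 0) ∈ Φ) {ψ : MF} (h : MLFrag Φ ψ) :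
    MLFrag Φ (MF.box ψ) :=
  MLFrag.app _ hΦ (fun _ => ψ) (fun _ => h)

lemma frag_diaIter {Φ : Set MF} (hΦ : MF.dia (MF.var 0) ∈ Φ) {ψ : MF} (h : MLFrag Φ ψ) :
    ∀ n, MLFrag Φ (MF.diaIter n ψ)
  | 0 => h
  | n + 1 => frag_dia hΦ (frag_diaIter hΦ h n)

lemma frag_boxIter {Φ : Set MF} (hΦ : MF.box (MF.var 0) ∈ Φ) {ψ : MF} (h : MLFrag Φ ψ) :
    ∀ n, MLFrag Φ (MF.boxIter n ψ)
  | 0 => h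
  | n + 1 => frag_box hΦ (frag_boxIter hΦ h n)

/-! ### Clone lemmas -/

lemma bfun_mk_eq {n : ℕ} {hn : 0 < n} {e1 e2 : (Fin n → Bool) → Bool} (h : ∀ v, e1 v = e2 v) :
    (⟨n, hn, e1⟩ : BFun) = ⟨n, hn, e2⟩ := by
  have : e1 = e2 := funext h
  rw [this]

lemma cloneGen_isClone (O : Set BFun) : IsClone (cloneGen O) := by
  constructor
  · intro n hn k
    intro D hD
    exact hD.1.1 n hn k
  · intro f hf m hm g hg
    intro D hD
    exact hD.1.2 f (hf D hD) m hm g (fun i => hg i D hD)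

lemma subset_cloneGen (O : Set BFun) : O ⊆ cloneGen O := by
  intro f hf D hD
  exact hD.2 hf

lemma cloneGen_subset {O : Set BFun} {D : Set BFun} (hD : IsClone D) (h : O ⊆ D) :
    cloneGen O ⊆ D :=
  Set.sInter_subset_of_mem ⟨hD, h⟩

lemma cloneGen_of_clone {C : Set BFun} (hC : IsClone C) : cloneGen C = C :=
  le_antisymm (cloneGen_subset hC le_rfl) (subset_cloneGen C)

/-- The set of constants available given the modal operators. -/
def Kset (hd hb : Bool) : Set BFun :=
  (if hd then {bfBot} else ∅) ∪ (if hb then {bfTop} else ∅)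

end StmtAux

namespace StmtAux

def restr {m : ℕ} (hm : 0 < m) (v : Fin m → Bool) : ℕ → Bool :=
  fun n => v (if h : n < m then ⟨n, h⟩ else ⟨0, hm⟩)

lemma lemA {C : Set BFun} {hd hb : Bool} {ψ : MF} (h : MLFrag (MOgen hd hb C) ψ)
    (m : ℕ) (hm : 0 < m) :
    (⟨m, hm, fun v => bval (restr hm v) ψ⟩ : BFun) ∈ cloneGen (C ∪ Kset hd hb) := by
  induction h with
  | var n =>
      have hp := (cloneGen_isClone (C ∪ Kset hd hb)).1 m hm
        (if h : n < m then ⟨n, h⟩ else ⟨0, hm⟩)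
      have he : (⟨m, hm, fun v => bval (restr hm v) (MF.var n)⟩ : BFun)
          = ⟨m, hm, fun v => v (if h : n < m then ⟨n, h⟩ else ⟨0, hm⟩)⟩ :=
        bfun_mk_eq (fun v => rfl)
      rw [he]; exact hp
  | app φ hφ σ hσ ih =>
      rcases hφ with ⟨hhd, rfl⟩ | ⟨hhb, rfl⟩ | ⟨g₀, hg₀, hdef⟩
      · have hbot : bfBot ∈ cloneGen (C ∪ Kset hd hb) :=
          subset_cloneGen _ (Or.inr (by simp [Kset, hhd]))
        have hproj := (cloneGen_isClone (C ∪ Kset hd hb)).1 m hm ⟨0, hm⟩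
        have hcomp := (cloneGen_isClone (C ∪ Kset hd hb)).2 bfBot hbot m hm
          (fun _ v => v ⟨0, hm⟩) (fun _ => hproj)
        have he : (⟨m, hm, fun v => bval (restr hm v) ((MF.dia (MF.var 0)).subst σ)⟩ : BFun)
            = ⟨m, hm, fun v => bfBot.eval (fun _ => v ⟨0, hm⟩)⟩ :=
          bfun_mk_eq (fun v => rfl)
        rw [he]; exact hcomp
      · have htop : bfTop ∈ cloneGen (C ∪ Kset hd hb) :=
          subset_cloneGen _ (Or.inr (by simp [Kset, hhb]))
        have hproj := (cloneGen_isClone (C ∪ Kset hd hb)).1 m hm ⟨0, hm⟩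
        have hcomp := (cloneGen_isClone (C ∪ Kset hd hb)).2 bfTop htop m hm
          (fun _ v => v ⟨0, hm⟩) (fun _ => hproj)
        have he : (⟨m, hm, fun v => bval (restr hm v) ((MF.box (MF.var 0)).subst σ)⟩ : BFun)
            = ⟨m, hm, fun v => bfTop.eval (fun _ => v ⟨0, hm⟩)⟩ :=
          bfun_mk_eq (fun v => rfl)
        rw [he]; exact hcomp
      · have hg : g₀ ∈ cloneGen (C ∪ Kset hd hb) := subset_cloneGen _ (Or.inl hg₀)
        have hcomp := (cloneGen_isClone (C ∪ Kset hd hb)).2 g₀ hg m hm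
          (fun i v => bval (restr hm v) (σ i.val)) (fun i => ih i.val)
        have he : (⟨m, hm, fun v => bval (restr hm v) (φ.subst σ)⟩ : BFun)
            = ⟨m, hm, fun v => g₀.eval (fun i => bval (restr hm v) (σ i.val))⟩ := by
          refine bfun_mk_eq (fun v => ?_)
          rw [bval_subst, bval_eq_propEval _ _ hdef.1, hdef.2]
        rw [he]; exact hcomp

lemma clos_subset {Λ : Set MF} (hval : ∀ φ ∈ Λ, validOnIrreflPoint φ) (C : Set BFun)
    (hd hb : Bool) : Clos Λ hd hb C ⊆ cloneGen (C ∪ Kset hd hb) := by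
  rintro f ⟨φ, ψ, ⟨hP, hEv⟩, hfrag, hiff⟩
  have key : ∀ u : ℕ → Bool, bval u ψ = f.eval (fun i => u i.val) := by
    intro u
    have hv := hval _ hiff (fun n => u n = true)
    have h1 := sat_irrefl u φ
    have h2 := sat_irrefl u ψ
    simp only [MF.iff, MF.imp, MF.sat] at hv
    have hiff2 : (bval u φ = true) ↔ (bval u ψ = true) := by
      rw [← h1, ← h2]; tauto
    rw [Bool.eq_iff_iff, ← hiff2, bval_eq_propEval u φ hP, hEv u]
  have hA := lemA hfrag f.arity f.arity_pos
  have he : (⟨f.arity, f.arity_pos, fun v => bval (restr f.arity_pos v) ψ⟩ : BFun) = f := by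
    obtain ⟨a, ha, ev⟩ := f
    refine bfun_mk_eq (fun v => ?_)
    rw [key (restr ha v)]
    congr 1
    funext i
    simp [restr, i.isLt]
  rw [← he]; exact hA

lemma mem_clos_of_mem_C {Λ : Set MF} (hΛ : NormalLogic Λ) {C : Set BFun} (hd hb : Bool)
    {f : BFun} (hf : f ∈ C) : f ∈ Clos Λ hd hb C := by
  refine ⟨mkProp f, mkProp f, defines_mkProp f, ?_, iff_refl hΛ _⟩
  have := MLFrag.app (Φ := MOgen hd hb C) (mkProp f)
    (Or.inr (Or.inr ⟨f, hf, defines_mkProp f⟩)) (fun n => MF.var n) (fun n => MLFrag.var n)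
  rwa [subst_id] at this

lemma clos_isClone {Λ : Set MF} (hΛ : NormalLogic Λ) (C : Set BFun) (hd hb : Bool) :
    IsClone (Clos Λ hd hb C) := by
  constructor
  · intro n hn k
    exact ⟨MF.var k.val, MF.var k.val, ⟨trivial, fun v => rfl⟩, MLFrag.var k.val, iff_refl hΛ _⟩
  · intro f hf m hm g hg
    obtain ⟨φf, ψf, hdf, hfr, hif⟩ := hf
    simp only [Clos, Set.mem_setOf_eq] at hg
    choose φs ψs hdefs hfrags hiffs using hg
    set Φm : ℕ → MF := fun n => if h : n < f.arity then φs ⟨n, h⟩ else MF.var n with hΦm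
    set Ψm : ℕ → MF := fun n => if h : n < f.arity then ψs ⟨n, h⟩ else MF.var n with hΨm
    refine ⟨mkProp ⟨m, hm, fun v => f.eval (fun i => g i v)⟩, ψf.subst Ψm,
      defines_mkProp _, ?_, ?_⟩
    · refine frag_subst hfr Ψm (fun n => ?_)
      by_cases h : n < f.arity
      · simpa [Ψm, h] using hfrags ⟨n, h⟩
      · simpa [Ψm, h] using MLFrag.var n
    · have l1 : (mkProp ⟨m, hm, fun v => f.eval (fun i => g i v)⟩).iff (φf.subst Φm) ∈ Λ := by
        refine iff_of_eval hΛ (isProp_mkProp _) (isProp_subst Φm (fun n => ?_) φf hdf.1) ?_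
        · by_cases h : n < f.arity
          · simpa [Φm, h] using (hdefs ⟨n, h⟩).1
          · simp [Φm, h, MF.isProp]
        · intro v
          rw [(defines_mkProp _).2 v, propEval_subst, hdf.2]
          show f.eval (fun i => g i (fun j : Fin m => v j.val)) = _
          congr 1
          funext i
          have : Φm i.val = φs i := by simp [Φm, i.isLt]
          rw [this, (hdefs i).2 v]
      have l2 : (φf.subst Φm).iff (φf.subst Ψm) ∈ Λ := by
        refine repl hΛ (fun n => ?_) φf
        by_cases h : n < f.arity
        · simpa [Φm, Ψm, h] using hiffs ⟨n, h⟩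
        · simpa [Φm, Ψm, h] using iff_refl hΛ (MF.var n)
      have l3 : (φf.subst Ψm).iff (ψf.subst Ψm) ∈ Λ := hΛ.usubst _ Ψm hif
      exact iff_trans hΛ (iff_trans hΛ l1 l2) l3

lemma bot_mem_clos {Λ : Set MF} (hΛ : NormalLogic Λ) {n : ℕ}
    (hnΛ : MF.boxIter n MF.bot ∈ Λ) (C : Set BFun) (hb : Bool) :
    bfBot ∈ Clos Λ true hb C := by
  refine ⟨MF.bot, MF.diaIter n (MF.var 0),
    ⟨by simp [MF.bot, MF.isProp], fun v => by simp [MF.bot, MF.propEval, bfBot]⟩,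
    frag_diaIter (Or.inl ⟨rfl, rfl⟩) (MLFrag.var 0) n,
    bot_iff_of_neg hΛ (neg_dian_mem hΛ hnΛ)⟩

lemma top_mem_clos {Λ : Set MF} (hΛ : NormalLogic Λ) {n : ℕ}
    (hnΛ : MF.boxIter n MF.bot ∈ Λ) (C : Set BFun) (hd : Bool) :
    bfTop ∈ Clos Λ hd true C := by
  refine ⟨MF.top, MF.boxIter n (MF.var 0),
    ⟨by simp [MF.top, MF.isProp], fun v => by simp [MF.top, MF.propEval, bfTop]⟩,
    frag_boxIter (Or.inr (Or.inl ⟨rfl, rfl⟩)) (MLFrag.var 0) n,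
    top_iff_of hΛ (boxn_var_mem hΛ hnΛ)⟩

lemma clos_eq {Λ : Set MF} (hΛ : NormalLogic Λ) (hB : TypeB Λ) (C : Set BFun)
    (hd hb : Bool) : Clos Λ hd hb C = cloneGen (C ∪ Kset hd hb) := by
  obtain ⟨hval, n, _, hnΛ⟩ := hB
  apply le_antisymm
  · exact clos_subset hval C hd hb
  · refine cloneGen_subset (clos_isClone hΛ C hd hb) ?_
    rintro f (hf | (hf | hf))
    · exact mem_clos_of_mem_C hΛ hd hb hf
    · cases hd with
      | false => simp at hf
      | true =>
          simp only [if_pos, Set.mem_singleton_iff] at hf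
          subst hf
          exact bot_mem_clos hΛ hnΛ C hb
    · cases hb with
      | false => simp at hf
      | true =>
          simp only [if_pos, Set.mem_singleton_iff] at hf
          subst hf
          exact top_mem_clos hΛ hnΛ C hd
end StmtAux

theorem stmt3 (Λ : Set MF) (hΛ : NormalLogic Λ) (hcons : Λ ≠ Set.univ)
    (hB : TypeB Λ) (C : Set BFun) (hC : IsClone C) :
    Clos Λ false false C = C ∧
    Clos Λ true false C = cloneGen (C ∪ {bfBot}) ∧
    Clos Λ false true C = cloneGen (C ∪ {bfTop}) ∧
    Clos Λ true true C = cloneGen (C ∪ {bfTop, bfBot}) := by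
  refine ⟨?_, ?_, ?_, ?_⟩
  · rw [StmtAux.clos_eq hΛ hB C false false]
    have h : C ∪ StmtAux.Kset false false = C := by simp [StmtAux.Kset]
    rw [h, StmtAux.cloneGen_of_clone hC]
  · rw [StmtAux.clos_eq hΛ hB C true false]
    have h : StmtAux.Kset true false = {bfBot} := by simp [StmtAux.Kset]
    rw [h]
  · rw [StmtAux.clos_eq hΛ hB C false true]
    have h : StmtAux.Kset false true = {bfTop} := by simp [StmtAux.Kset]
    rw [h]
  · rw [StmtAux.clos_eq hΛ hB C true true]
    have h : StmtAux.Kset true true = {bfTop, bfBot} := by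
      rw [show StmtAux.Kset true true = {bfBot} ∪ {bfTop} by simp [StmtAux.Kset],
        Set.union_comm, Set.singleton_union]
    rw [h]
end

section
/- Let Λ be a consistent normal modal logic of Type C (i.e., F_• ⊨ Λ, Λ ⊬ □^n⊥ for all n ≥ 1, and Λ ⊢ ◇^{≤n}□⊥ for some n ≥ 1), let M ⊆ {◇,□}, and let C be any Boolean clone. Then C ⊆ Clos^Λ_M(C), and Clos^Λ_M(C) is contained in: C if M = ∅; the clone generated by C ∪ {⊥} if M = {◇}; the clone generated by C ∪ {⊤} if M = {□}; and the clone generated by C ∪ {⊤,⊥} if M = {◇,□}. -/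
set_option maxHeartbeats 1000000

/-! ### Auxiliary machinery for stmt4 -/

namespace Stmt4Aux

/-- Evaluation of a modal formula at the single irreflexive world. -/
def ieval (v : ℕ → Bool) : MF → Bool
  | .var n => v n
  | .neg φ => !(ieval v φ)
  | .and φ ψ => ieval v φ && ieval v ψ
  | .or φ ψ => ieval v φ || ieval v ψ
  | .dia _ => false
  | .box _ => true

lemma ieval_prop (φ : MF) (h : φ.isProp) (v : ℕ → Bool) : ieval v φ = φ.propEval v := by
  induction φ <;> simp_all [ieval, MF.propEval, MF.isProp]

lemma ieval_subst (σ : ℕ → MF) (v : ℕ → Bool) (φ : MF) :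
    ieval v (φ.subst σ) = ieval (fun n => ieval v (σ n)) φ := by
  induction φ <;> simp_all [ieval, MF.subst]

lemma sat_irrefl (v : ℕ → Bool) (φ : MF) :
    MF.sat (W := Unit) (fun _ _ => False) (fun n _ => v n = true) φ () ↔ ieval v φ = true := by
  induction φ with
  | var n => simp [MF.sat, ieval]
  | neg φ ih => simp [MF.sat, ieval, ih]
  | and φ ψ ih1 ih2 => simp [MF.sat, ieval, ih1, ih2]
  | or φ ψ ih1 ih2 => simp [MF.sat, ieval, ih1, ih2]
  | dia φ ih => simp [MF.sat, ieval]
  | box φ ih => simp [MF.sat, ieval]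

lemma ieval_eq_of_iff {Λ : Set MF} (hIr : ∀ φ ∈ Λ, validOnIrreflPoint φ) {φ ψ : MF}
    (h : (φ.iff ψ) ∈ Λ) (v : ℕ → Bool) : ieval v φ = ieval v ψ := by
  have hs := hIr _ h (fun n => v n = true)
  simp only [MF.iff, MF.imp, MF.sat] at hs
  have h1 := (sat_irrefl v φ)
  have h2 := (sat_irrefl v ψ)
  cases hφ : ieval v φ <;> cases hψ : ieval v ψ <;> simp_all

lemma mem_cloneGen_iff {O : Set BFun} {f : BFun} :
    f ∈ cloneGen O ↔ ∀ D, IsClone D → O ⊆ D → f ∈ D := by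
  simp only [cloneGen, Set.mem_sInter, Set.mem_setOf_eq, and_imp]

lemma subset_cloneGen (O : Set BFun) : O ⊆ cloneGen O :=
  fun f hf => mem_cloneGen_iff.2 fun _ _ hO => hO hf

lemma isClone_cloneGen (O : Set BFun) : IsClone (cloneGen O) := by
  constructor
  · intro n hn k
    exact mem_cloneGen_iff.2 fun D hD _ => hD.1 n hn k
  · intro f hf m hm g hg
    exact mem_cloneGen_iff.2 fun D hD hO =>
      hD.2 f (mem_cloneGen_iff.1 hf D hD hO) m hm g
        (fun i => mem_cloneGen_iff.1 (hg i) D hD hO)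

lemma constFalse_mem {D : Set BFun} (hD : IsClone D) (hb : bfBot ∈ D) (m : ℕ) (hm : 0 < m) :
    (⟨m, hm, fun _ => false⟩ : BFun) ∈ D :=
  hD.2 bfBot hb m hm (fun _ v => v ⟨0, hm⟩) (fun _ => hD.1 m hm ⟨0, hm⟩)

lemma constTrue_mem {D : Set BFun} (hD : IsClone D) (ht : bfTop ∈ D) (m : ℕ) (hm : 0 < m) :
    (⟨m, hm, fun _ => true⟩ : BFun) ∈ D :=
  hD.2 bfTop ht m hm (fun _ v => v ⟨0, hm⟩) (fun _ => hD.1 m hm ⟨0, hm⟩)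

lemma cloneLemma {C D : Set BFun} {hd hb : Bool} (hD : IsClone D) (hCD : C ⊆ D)
    (hdia : hd = true → ∀ m (hm : 0 < m), (⟨m, hm, fun _ => false⟩ : BFun) ∈ D)
    (hbox : hb = true → ∀ m (hm : 0 < m), (⟨m, hm, fun _ => true⟩ : BFun) ∈ D)
    {ψ : MF} (h : MLFrag (MOgen hd hb C) ψ) :
    ∀ m (hm : 0 < m) (e : ℕ → (Fin m → Bool) → Bool),
      (∀ k, (⟨m, hm, e k⟩ : BFun) ∈ D) →
      (⟨m, hm, fun u => ieval (fun k => e k u) ψ⟩ : BFun) ∈ D := by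
  induction h with
  | var n => intro m hm e he; exact he n
  | app φ₀ hφ₀ σ hσ ih =>
    intro m hm e he
    rcases hφ₀ with ⟨hdt, rfl⟩ | ⟨hbt, rfl⟩ | ⟨g, hg, hgdef⟩
    · exact hdia hdt m hm
    · exact hbox hbt m hm
    · have hcomp := hD.2 g (hCD hg) m hm
        (fun i u => ieval (fun k => e k u) (σ i.val)) (fun i => ih i.val m hm e he)
      have heq : (fun u => ieval (fun k => e k u) (φ₀.subst σ))
          = (fun u => g.eval fun i => ieval (fun k => e k u) (σ i.val)) := by
        funext u
        rw [ieval_subst, ieval_prop _ hgdef.1, hgdef.2]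
      rw [heq]
      exact hcomp

/-- Truth-table formula defining an arbitrary Boolean function. -/
def tf : (n : ℕ) → ((Fin n → Bool) → Bool) → MF
  | 0, g => if g Fin.elim0 then MF.top else MF.bot
  | n + 1, g => .or (.and (.var n) (tf n (fun u => g (Fin.snoc u true))))
      (.and (.neg (.var n)) (tf n (fun u => g (Fin.snoc u false))))

lemma tf_isProp (n : ℕ) : ∀ g, (tf n g).isProp := by
  induction n with
  | zero =>
    intro g
    by_cases h : g Fin.elim0 <;> simp [tf, h, MF.top, MF.bot, MF.isProp]
  | succ n ih =>
    intro g
    exact ⟨⟨trivial, ih _⟩, ⟨trivial, ih _⟩⟩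

lemma tf_eval (n : ℕ) : ∀ g (v : ℕ → Bool), (tf n g).propEval v = g (fun i => v i.val) := by
  induction n with
  | zero =>
    intro g v
    have h0 : (fun i : Fin 0 => v i.val) = Fin.elim0 := funext fun i => i.elim0
    rw [h0]
    by_cases h : g Fin.elim0 <;> simp [tf, h, MF.top, MF.bot, MF.propEval]
  | succ n ih =>
    intro g v
    have hsnoc : (fun i : Fin (n + 1) => v i.val) = Fin.snoc (fun i : Fin n => v i.val) (v n) := by
      funext i
      refine Fin.lastCases ?_ ?_ i
      · simp [Fin.snoc_last]
      · intro j; simp [Fin.snoc_castSucc]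
    rw [hsnoc]
    simp only [tf, MF.propEval]
    rw [ih, ih]
    cases hv : v n <;> simp [hv]

lemma subst_var (φ : MF) : φ.subst MF.var = φ := by
  induction φ <;> simp_all [MF.subst]

lemma iff_self_taut (φ : MF) (h : φ.isProp) : (φ.iff φ).isTautology := by
  refine ⟨⟨⟨h, h⟩, ⟨h, h⟩⟩, fun v => ?_⟩
  cases hh : φ.propEval v <;> simp [MF.iff, MF.imp, MF.propEval, hh]

/-- Projection environment sending variable `k` to a projection. -/
def projE (m : ℕ) (hm : 0 < m) (k : ℕ) : (Fin m → Bool) → Bool :=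
  fun u => u (if h : k < m then ⟨k, h⟩ else ⟨0, hm⟩)

lemma projE_lt (m : ℕ) (hm : 0 < m) (i : Fin m) (u : Fin m → Bool) :
    projE m hm i.val u = u i := by
  simp [projE, i.isLt]

lemma closSub {Λ : Set MF} (hIr : ∀ φ ∈ Λ, validOnIrreflPoint φ) {C D : Set BFun}
    (hD : IsClone D) (hCD : C ⊆ D) {hd hb : Bool}
    (hdia : hd = true → ∀ m (hm : 0 < m), (⟨m, hm, fun _ => false⟩ : BFun) ∈ D)
    (hbox : hb = true → ∀ m (hm : 0 < m), (⟨m, hm, fun _ => true⟩ : BFun) ∈ D) :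
    Clos Λ hd hb C ⊆ D := by
  rintro ⟨m, hm, fe⟩ ⟨φ, ψ, hdef, hfrag, hiff⟩
  have he : ∀ k, (⟨m, hm, projE m hm k⟩ : BFun) ∈ D := fun k => hD.1 m hm _
  have hmem := cloneLemma hD hCD hdia hbox hfrag m hm (projE m hm) he
  have key : fe = fun u => ieval (fun k => projE m hm k u) ψ := by
    funext u
    have h1 : (fun i : Fin m => projE m hm i.val u) = u := funext fun i => projE_lt m hm i u
    calc fe u = fe (fun i => projE m hm i.val u) := by rw [h1]
      _ = φ.propEval (fun k => projE m hm k u) := by exact (hdef.2 (fun k => projE m hm k u)).symm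
      _ = ieval (fun k => projE m hm k u) φ := (ieval_prop φ hdef.1 _).symm
      _ = ieval (fun k => projE m hm k u) ψ := ieval_eq_of_iff hIr hiff _
  rw [show (⟨m, hm, fe⟩ : BFun) = ⟨m, hm, fun u => ieval (fun k => projE m hm k u) ψ⟩ by
    rw [key]]
  exact hmem

end Stmt4Aux

theorem stmt4 (Λ : Set MF) (hΛ : NormalLogic Λ) (hcons : Λ ≠ Set.univ)
    (hTC : TypeC Λ) (C : Set BFun) (hC : IsClone C) :
    (∀ hd hb : Bool, C ⊆ Clos Λ hd hb C) ∧
    Clos Λ false false C ⊆ C ∧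
    Clos Λ true false C ⊆ cloneGen (C ∪ {bfBot}) ∧
    Clos Λ false true C ⊆ cloneGen (C ∪ {bfTop}) ∧
    Clos Λ true true C ⊆ cloneGen (C ∪ {bfTop, bfBot}) := by
  open Stmt4Aux in
  refine ⟨?_, ?_, ?_, ?_, ?_⟩
  · intro hd hb f hf
    have hdef : definesBF (tf f.arity f.eval) f := ⟨tf_isProp _ _, fun v => tf_eval _ _ v⟩
    have hmem : tf f.arity f.eval ∈ MOgen hd hb C := Or.inr (Or.inr ⟨f, hf, hdef⟩)
    have hfrag : MLFrag (MOgen hd hb C) ((tf f.arity f.eval).subst MF.var) :=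
      MLFrag.app _ hmem MF.var (fun n => MLFrag.var n)
    rw [subst_var] at hfrag
    exact ⟨_, _, hdef, hfrag, hΛ.taut _ (iff_self_taut _ hdef.1)⟩
  · exact closSub hTC.1 hC (fun _ h => h) (fun h => by simp at h) (fun h => by simp at h)
  · exact closSub hTC.1 (isClone_cloneGen _)
      (fun f hf => subset_cloneGen _ (Set.mem_union_left _ hf))
      (fun _ => constFalse_mem (isClone_cloneGen _)
        (subset_cloneGen _ (Set.mem_union_right _ rfl)))
      (fun h => by simp at h)
  · exact closSub hTC.1 (isClone_cloneGen _)
      (fun f hf => subset_cloneGen _ (Set.mem_union_left _ hf))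
      (fun h => by simp at h)
      (fun _ => constTrue_mem (isClone_cloneGen _)
        (subset_cloneGen _ (Set.mem_union_right _ rfl)))
  · exact closSub hTC.1 (isClone_cloneGen _)
      (fun f hf => subset_cloneGen _ (Set.mem_union_left _ hf))
      (fun _ => constFalse_mem (isClone_cloneGen _)
        (subset_cloneGen _ (Set.mem_union_right _ (Set.mem_insert_iff.2 (Or.inr rfl)))))
      (fun _ => constTrue_mem (isClone_cloneGen _)
        (subset_cloneGen _ (Set.mem_union_right _ (Set.mem_insert _ _))))
end
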